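/- Let σ be a minimal permutation with d descents and let n be its size. Then d + 1 ≤ n ≤ 2d. -/

import Mathlib

/-- `σ` has a descent at (0-based) position `i`, i.e. `σ i > σ (i+1)`. -/
def IsDescentAt {n : ℕ} (σ : Equiv.Perm (Fin n)) (i : ℕ) : Prop :=
  ∃ h : i + 1 < n, σ ⟨i + 1, h⟩ < σ ⟨i, Nat.lt_of_succ_lt h⟩

/-- The number of descents of `σ`. -/
noncomputable def descNum {n : ℕ} (σ : Equiv.Perm (Fin n)) : ℕ :=
  {i : ℕ | IsDescentAt σ i}.ncard

/-- `π` is a pattern of `σ` (written `π ≺ σ`). -/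
def IsPattern {k n : ℕ} (π : Equiv.Perm (Fin k)) (σ : Equiv.Perm (Fin n)) : Prop :=
  ∃ f : Fin k ↪o Fin n, ∀ ℓ m : Fin k, π ℓ < π m → σ (f ℓ) < σ (f m)

/-- `σ` is a minimal permutation with `d` descents: it has `d` descents and every
pattern `π ≺ σ` with `π ≠ σ` (equivalently, of strictly smaller size) has fewer
than `d` descents. -/
def MinimalWithDescents (d : ℕ) {n : ℕ} (σ : Equiv.Perm (Fin n)) : Prop :=
  descNum σ = d ∧
    ∀ (k : ℕ) (π : Equiv.Perm (Fin k)), k < n → IsPattern π σ → descNum π < d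

/-- A minimal permutation with `d` descents (`d ≥ 1`) has size `n` with `d + 1 ≤ n ≤ 2d`. -/
lemma mk_eq_mk {n a b : ℕ} (ha : a < n) (hb : b < n) (h : a = b) :
    (⟨a, ha⟩ : Fin n) = ⟨b, hb⟩ := by subst h; rfl

lemma perm_congr {n a b : ℕ} (σ : Equiv.Perm (Fin n)) (ha : a < n) (hb : b < n) (h : a = b) :
    σ ⟨a, ha⟩ = σ ⟨b, hb⟩ := congrArg σ (mk_eq_mk ha hb h)

noncomputable def delPerm {m : ℕ} (σ : Equiv.Perm (Fin (m+1))) (j : Fin (m+1)) :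
    Equiv.Perm (Fin m) :=
  (finSuccAboveEquiv j).trans
    ((σ.subtypeEquiv (fun _ => not_congr (EmbeddingLike.apply_eq_iff_eq σ).symm)).trans
      (finSuccAboveEquiv (σ j)).symm)

lemma delPerm_spec {m : ℕ} (σ : Equiv.Perm (Fin (m+1))) (j : Fin (m+1)) (x : Fin m) :
    (σ j).succAbove (delPerm σ j x) = σ (j.succAbove x) := by
  have h : delPerm σ j x = (finSuccAboveEquiv (σ j)).symm
      ⟨σ (j.succAbove x), fun hc => (j.succAbove_ne x) (σ.injective hc)⟩ := by
    simp [delPerm, finSuccAboveEquiv_apply, Equiv.subtypeEquiv]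
  rw [h]
  have h2 := congrArg Subtype.val ((finSuccAboveEquiv (σ j)).apply_symm_apply
      ⟨σ (j.succAbove x), fun hc => (j.succAbove_ne x) (σ.injective hc)⟩)
  rw [finSuccAboveEquiv_apply] at h2
  exact h2

lemma delPerm_lt_iff {m : ℕ} (σ : Equiv.Perm (Fin (m+1))) (j : Fin (m+1)) (x y : Fin m) :
    delPerm σ j x < delPerm σ j y ↔ σ (j.succAbove x) < σ (j.succAbove y) := by
  rw [← Fin.succAbove_lt_succAbove_iff (p := σ j), delPerm_spec, delPerm_spec]

lemma succAbove_mk_of_lt {m : ℕ} (j : Fin (m+1)) (i : ℕ) (him : i < m) (hij : i < j.val) :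
    j.succAbove ⟨i, him⟩ = ⟨i, Nat.lt_succ_of_lt him⟩ :=
  Fin.succAbove_of_castSucc_lt _ _ (by simpa [Fin.lt_def] using hij)

lemma succAbove_mk_of_ge {m : ℕ} (j : Fin (m+1)) (i : ℕ) (him : i < m) (hij : j.val ≤ i) :
    j.succAbove ⟨i, him⟩ = ⟨i + 1, Nat.succ_lt_succ him⟩ :=
  Fin.succAbove_of_le_castSucc _ _ (by simpa [Fin.le_def] using hij)

lemma succAbove_mk_of_lt' {m jv : ℕ} (hjv : jv < m + 1) (i : ℕ) (him : i < m) (hij : i < jv) :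
    (⟨jv, hjv⟩ : Fin (m+1)).succAbove ⟨i, him⟩ = ⟨i, Nat.lt_succ_of_lt him⟩ :=
  succAbove_mk_of_lt _ _ him hij

lemma succAbove_mk_of_ge' {m jv : ℕ} (hjv : jv < m + 1) (i : ℕ) (him : i < m) (hij : jv ≤ i) :
    (⟨jv, hjv⟩ : Fin (m+1)).succAbove ⟨i, him⟩ = ⟨i + 1, Nat.succ_lt_succ him⟩ :=
  succAbove_mk_of_ge _ _ him hij

section Del

variable {m : ℕ} (σ : Equiv.Perm (Fin (m+1))) {jv : ℕ} (hjv : jv < m + 1)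

lemma descent_ne_j
    (h1 : ∀ _ : 0 < jv, σ ⟨jv - 1, by omega⟩ < σ ⟨jv, hjv⟩)
    (h2 : ∀ hj : jv + 1 < m + 1, σ ⟨jv, hjv⟩ < σ ⟨jv + 1, hj⟩)
    (s : ℕ) (hsD : IsDescentAt σ s) : s ≠ jv ∧ s + 1 ≠ jv := by
  obtain ⟨hs, hlt⟩ := hsD
  constructor
  · intro he
    have a2 := h2 (by omega)
    rw [perm_congr σ hjv (Nat.lt_of_succ_lt hs) he.symm,
      perm_congr σ (by omega) hs (show jv + 1 = s + 1 by omega)] at a2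
    exact absurd hlt (asymm a2)
  · intro he
    have a1 := h1 (by omega)
    rw [perm_congr σ (by omega) (Nat.lt_of_succ_lt hs) (show jv - 1 = s by omega),
      perm_congr σ hjv hs (show jv = s + 1 by omega)] at a1
    exact absurd hlt (asymm a1)

lemma delPerm_descSet
    (h1 : ∀ _ : 0 < jv, σ ⟨jv - 1, by omega⟩ < σ ⟨jv, hjv⟩)
    (h2 : ∀ hj : jv + 1 < m + 1, σ ⟨jv, hjv⟩ < σ ⟨jv + 1, hj⟩) :
    {i : ℕ | IsDescentAt (delPerm σ ⟨jv, hjv⟩) i} =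
      (fun s => if s < jv then s else s - 1) '' {i : ℕ | IsDescentAt σ i} := by
  have hjm : jv ≤ m := by omega
  ext i
  simp only [Set.mem_image, Set.mem_setOf_eq]
  constructor
  · rintro ⟨hi, hlt⟩
    rw [delPerm_lt_iff] at hlt
    rcases lt_trichotomy (i+1) jv with hc | hc | hc
    · refine ⟨i, ⟨by omega, ?_⟩, by simp [show i < jv by omega]⟩
      rwa [succAbove_mk_of_lt' _ _ _ hc, succAbove_mk_of_lt' _ _ _ (by omega)] at hlt
    · exfalso
      rw [succAbove_mk_of_ge' _ _ _ (by omega), succAbove_mk_of_lt' _ _ _ (by omega)] at hlt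
      have a1 := h1 (by omega)
      have a2 := h2 (by omega)
      rw [perm_congr σ (by omega) (by omega : i < m + 1) (show jv - 1 = i by omega)] at a1
      rw [perm_congr σ (by omega) (by omega : i + 1 + 1 < m + 1)
        (show jv + 1 = i + 1 + 1 by omega)] at a2
      exact absurd (hlt.trans (a1.trans a2)) (lt_irrefl _)
    · refine ⟨i + 1, ⟨by omega, ?_⟩, by simp [show ¬ (i + 1 < jv) by omega]⟩
      rwa [succAbove_mk_of_ge' _ _ _ (by omega), succAbove_mk_of_ge' _ _ _ (by omega)] at hlt
  · rintro ⟨s, hsD, rfl⟩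
    obtain ⟨hsj, hs1j⟩ := descent_ne_j σ hjv h1 h2 s hsD
    obtain ⟨hs, hlt⟩ := hsD
    rcases lt_or_gt_of_ne hsj with hc | hc
    · have hc1 : s + 1 < jv := by omega
      simp only [if_pos hc]
      refine ⟨by omega, ?_⟩
      rw [delPerm_lt_iff, succAbove_mk_of_lt' _ _ _ hc1, succAbove_mk_of_lt' _ _ _ hc]
      exact hlt
    · have h0 : 0 < s := by omega
      simp only [if_neg (by omega : ¬ s < jv)]
      refine ⟨by omega, ?_⟩
      rw [delPerm_lt_iff, succAbove_mk_of_ge' _ _ (by omega) (by omega),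
        succAbove_mk_of_ge' _ _ (by omega) (by omega)]
      rw [perm_congr σ (by omega) hs (show s - 1 + 1 + 1 = s + 1 by omega),
        perm_congr σ (by omega) (Nat.lt_of_succ_lt hs) (show s - 1 + 1 = s by omega)]
      exact hlt

lemma delPerm_descNum
    (h1 : ∀ _ : 0 < jv, σ ⟨jv - 1, by omega⟩ < σ ⟨jv, hjv⟩)
    (h2 : ∀ hj : jv + 1 < m + 1, σ ⟨jv, hjv⟩ < σ ⟨jv + 1, hj⟩) :
    descNum (delPerm σ ⟨jv, hjv⟩) = descNum σ := by
  rw [descNum, descNum, delPerm_descSet σ hjv h1 h2]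
  apply Set.ncard_image_of_injOn
  intro s hsD t htD he
  obtain ⟨hs1, hs2⟩ := descent_ne_j σ hjv h1 h2 s hsD
  obtain ⟨ht1, ht2⟩ := descent_ne_j σ hjv h1 h2 t htD
  simp only at he
  split_ifs at he <;> omega

lemma delPerm_isPattern (j : Fin (m+1)) : IsPattern (delPerm σ j) σ :=
  ⟨j.succAboveOrderEmb, fun x y h => by
    rw [Fin.succAboveOrderEmb_apply, Fin.succAboveOrderEmb_apply]
    exact (delPerm_lt_iff σ j x y).mp h⟩

lemma no_del_point {d : ℕ} (h : MinimalWithDescents d σ)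
    (h1 : ∀ _ : 0 < jv, σ ⟨jv - 1, by omega⟩ < σ ⟨jv, hjv⟩)
    (h2 : ∀ hj : jv + 1 < m + 1, σ ⟨jv, hjv⟩ < σ ⟨jv + 1, hj⟩) : False := by
  have := h.2 m (delPerm σ ⟨jv, hjv⟩) (Nat.lt_succ_self m) (delPerm_isPattern σ _)
  rw [delPerm_descNum σ hjv h1 h2, h.1] at this
  exact lt_irrefl _ this

end Del

lemma ascent_of_not_descent {n : ℕ} (σ : Equiv.Perm (Fin n)) (i : ℕ) (h : i + 1 < n)
    (hnd : ¬ IsDescentAt σ i) : σ ⟨i, Nat.lt_of_succ_lt h⟩ < σ ⟨i + 1, h⟩ := by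
  have h1 : ¬ σ ⟨i + 1, h⟩ < σ ⟨i, Nat.lt_of_succ_lt h⟩ := fun hc => hnd ⟨h, hc⟩
  rcases lt_or_eq_of_le (not_lt.1 h1) with h2 | h2
  · exact h2
  · exfalso
    have := σ.injective h2
    simp only [Fin.mk.injEq] at this
    omega

theorem size_of_minimal_between {n d : ℕ} (hd : 1 ≤ d) (σ : Equiv.Perm (Fin n))
    (h : MinimalWithDescents d σ) : d + 1 ≤ n ∧ n ≤ 2 * d := by
  set S := {i : ℕ | IsDescentAt σ i} with hS
  have hSd : S.ncard = d := h.1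
  have hSsub : S ⊆ ↑(Finset.range (n - 1)) := by
    rintro i ⟨hi, -⟩
    simp only [Finset.coe_range, Set.mem_Iio]
    omega
  have hSfin : S.Finite := (Finset.range (n-1)).finite_toSet.subset hSsub
  have hd_le : d ≤ n - 1 := by
    rw [← hSd]
    calc S.ncard ≤ (↑(Finset.range (n-1)) : Set ℕ).ncard :=
          Set.ncard_le_ncard hSsub (Finset.range (n-1)).finite_toSet
      _ = n - 1 := by rw [Set.ncard_coe_finset, Finset.card_range]
  have hn2 : 2 ≤ n := by
    by_contra hn
    have hSe : S = ∅ := by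
      ext i
      simp only [Set.mem_empty_iff_false, iff_false, hS, Set.mem_setOf_eq]
      rintro ⟨hi, -⟩; omega
    rw [hSe, Set.ncard_empty] at hSd
    omega
  refine ⟨by omega, ?_⟩
  obtain ⟨m, rfl⟩ : ∃ m, n = m + 1 := ⟨n - 1, by omega⟩
  have hm1 : 1 ≤ m := by omega
  -- 0 is a descent
  have h0 : 0 ∈ S := by
    by_contra h0
    exact no_del_point σ (by omega : 0 < m + 1) h
      (fun hj => absurd hj (by omega))
      (fun hj => ascent_of_not_descent σ 0 (by omega) h0)
  -- m - 1 is a descent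
  have hlast : m - 1 ∈ S := by
    by_contra hl
    refine no_del_point σ (by omega : m < m + 1) h (fun hj => ?_) (fun hj => absurd hj (by omega))
    have asc := ascent_of_not_descent σ (m - 1) (by omega) hl
    rwa [perm_congr σ (by omega) (by omega : m < m + 1) (show m - 1 + 1 = m by omega)] at asc
  -- no two consecutive ascents
  have hmid : ∀ i : ℕ, i + 1 ≤ m - 1 → i ∉ S → i + 1 ∈ S := by
    intro i hi hiS
    by_contra hi1S
    refine no_del_point σ (by omega : i + 1 < m + 1) h (fun hj => ?_) (fun hj => ?_)
    · have asc := ascent_of_not_descent σ i (by omega) hiS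
      rwa [perm_congr σ (Nat.lt_of_succ_lt (by omega)) (by omega : i + 1 - 1 < m + 1)
        (by omega : i = i + 1 - 1)] at asc
    · exact ascent_of_not_descent σ (i + 1) (by omega) hi1S
  -- counting
  set T := (↑(Finset.range m) : Set ℕ) \ S with hT
  have hmapsto : ∀ t ∈ T, t + 1 ∈ S \ {0} := by
    rintro t ⟨ht1, ht2⟩
    simp only [Finset.coe_range, Set.mem_Iio] at ht1
    have htm : t ≠ m - 1 := fun he => ht2 (he ▸ hlast)
    exact ⟨hmid t (by omega) ht2, by simp⟩
  have hcard1 : T.ncard ≤ (S \ {0}).ncard :=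
    Set.ncard_le_ncard_of_injOn (· + 1) hmapsto
      (fun a _ b _ hab => by simpa using hab) hSfin.diff
  have hcard2 : (S \ {0}).ncard = d - 1 := by
    rw [Set.ncard_diff_singleton_of_mem h0, hSd]
  have hcard3 : T.ncard = m - d := by
    rw [hT, Set.ncard_diff ?_ hSfin, Set.ncard_coe_finset, Finset.card_range, hSd]
    rintro i ⟨hi, -⟩
    simp only [Finset.coe_range, Set.mem_Iio]
    omega
  omega
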